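/- Under assumptions (A1)–(A6), set c₀ = inf_N J, where N is the Nehari–Pankov manifold of J. Then c₀ ≥ a > 0 and J has a (PS)_{c₀}-sequence in N, i.e. there exists a sequence (uₙ) ⊂ N with J(uₙ) → c₀ and ‖J'(uₙ)‖_{X*} → 0. -/

import Mathlib

open Filter Topology NormedSpace Set TopologicalSpace


lemma exists_functional_vanishing {Z : Type*} [NormedAddCommGroup Z] [NormedSpace ℝ Z]
    (W : Submodule ℝ Z) (hW : IsClosed (W : Set Z)) {x : Z} (hx : x ∉ W) :
    ∃ f : Z →L[ℝ] ℝ, (∀ w ∈ W, f w = 0) ∧ 0 < f x := by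
  obtain ⟨f, u, hfs, hux⟩ := geometric_hahn_banach_closed_point (W.convex) hW hx
  have h0 : (0 : Z) ∈ (W : Set Z) := W.zero_mem
  have hu0 : 0 < u := by simpa using hfs 0 h0
  refine ⟨f, ?_, lt_trans hu0 hux⟩
  intro w hw
  by_contra hfw
  have h1 : f (((u + 1) / f w) • w) < u := hfs _ (W.smul_mem _ hw)
  rw [map_smul] at h1
  have h2 : (u + 1) / f w * f w = u + 1 := div_mul_cancel₀ _ hfw
  simp only [smul_eq_mul, h2] at h1
  linarith

/-- A normed space whose dual is separable is itself separable. -/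
lemma separable_of_dual_separable {Z : Type*} [NormedAddCommGroup Z] [NormedSpace ℝ Z]
    [SeparableSpace (StrongDual ℝ Z)] : SeparableSpace Z := by
  obtain ⟨D, hDc, hDd⟩ := exists_countable_dense (StrongDual ℝ Z)
  have hne : D.Nonempty := hDd.nonempty
  obtain ⟨F, hF⟩ := hDc.exists_eq_range hne
  -- choose almost-norming vectors
  have hx : ∀ f : StrongDual ℝ Z, ∃ x : Z, ‖x‖ ≤ 1 ∧ ‖f‖ / 2 ≤ |f x| := by
    intro f
    rcases eq_or_lt_of_le (norm_nonneg f) with h0 | h0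
    · exact ⟨0, by simp, by simp [← h0]⟩
    · have : ¬ (∀ x : Z, ‖f x‖ ≤ (‖f‖ / 2) * ‖x‖) := by
        intro hc
        have := f.opNorm_le_bound (by positivity) hc
        linarith
      push_neg at this
      obtain ⟨x, hxf⟩ := this
      have hxne : x ≠ 0 := by
        rintro rfl; simp at hxf
      have hxn : 0 < ‖x‖ := norm_pos_iff.2 hxne
      refine ⟨‖x‖⁻¹ • x, ?_, ?_⟩
      · rw [norm_smul, norm_inv, norm_norm, inv_mul_cancel₀ hxn.ne']
      · rw [map_smul, smul_eq_mul, abs_mul, abs_inv, abs_norm]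
        rw [Real.norm_eq_abs] at hxf
        have h1 : ‖x‖⁻¹ * ‖x‖ = 1 := inv_mul_cancel₀ hxn.ne'
        nlinarith [mul_le_mul_of_nonneg_left hxf.le (inv_nonneg.2 hxn.le)]
  -- the norming vectors span a dense subspace
  choose x hx1 hx2 using fun n => hx (F n)
  have hWsep : IsSeparable (Submodule.span ℝ (range x) : Set Z) :=
    (Set.countable_range x).isSeparable.span
  set W : Submodule ℝ Z := (Submodule.span ℝ (range x)).topologicalClosure with hW
  have hWtop : W = ⊤ := by
    by_contra hne'
    obtain ⟨z, hz⟩ : ∃ z : Z, z ∉ W := by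
      by_contra hc; push_neg at hc
      exact hne' (Submodule.eq_top_iff'.2 hc)
    obtain ⟨f, hfW, hfz⟩ := exists_functional_vanishing W
      (by rw [hW]; exact Submodule.isClosed_topologicalClosure _) hz
    have hfne : f ≠ 0 := by
      intro h; rw [h] at hfz; simp at hfz
    have hfn : 0 < ‖f‖ := norm_pos_iff.2 hfne
    set f' : StrongDual ℝ Z := ‖f‖⁻¹ • f with hf'
    have hf'W : ∀ w ∈ W, f' w = 0 := by
      intro w hw; simp [hf', hfW w hw]
    have hf'n : ‖f'‖ = 1 := by
      rw [hf', norm_smul, norm_inv, norm_norm, inv_mul_cancel₀ hfn.ne']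
    obtain ⟨g, hgD, hgd⟩ := hDd.exists_dist_lt f' (by norm_num : (0:ℝ) < 1/4)
    rw [hF] at hgD
    obtain ⟨n, rfl⟩ := hgD
    rw [dist_eq_norm] at hgd
    have hFn : (3:ℝ)/4 ≤ ‖F n‖ := by
      have := norm_sub_norm_le f' (F n)
      rw [hf'n] at this
      have h4 : ‖f' - F n‖ = ‖f' - F n‖ := rfl
      linarith [this]
    have hxW : x n ∈ W :=
      (Submodule.le_topologicalClosure _) (Submodule.subset_span (mem_range_self n))
    have h5 : |F n (x n)| ≤ 1/4 := by
      have : F n (x n) = F n (x n) - f' (x n) := by rw [hf'W _ hxW]; ring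
      rw [this]
      calc |F n (x n) - f' (x n)| = ‖(F n - f') (x n)‖ := by
            rw [ContinuousLinearMap.sub_apply, Real.norm_eq_abs]
        _ ≤ ‖F n - f'‖ * ‖x n‖ := (F n - f').le_opNorm _
        _ ≤ ‖F n - f'‖ * 1 := by
            have := (F n - f').opNorm_nonneg
            exact mul_le_mul_of_nonneg_left (hx1 n) this
        _ ≤ 1/4 := by rw [mul_one, ← norm_neg, neg_sub]; exact hgd.le
    have h6 := hx2 n
    linarith
  have h8 : (W : Set Z) = closure (Submodule.span ℝ (range x) : Set Z) :=
    (Submodule.topologicalClosure_coe _)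
  have h9 : IsSeparable (univ : Set Z) := by
    have h10 : (univ : Set Z) = closure (Submodule.span ℝ (range x) : Set Z) := by
      rw [← h8, hWtop, Submodule.top_coe]
    rw [h10]; exact hWsep.closure
  exact isSeparable_univ_iff.1 h9

/-- A closed subspace of a reflexive space is reflexive. -/
lemma subspace_reflexive {X : Type*} [NormedAddCommGroup X] [NormedSpace ℝ X]
    (hrefl : Function.Surjective (inclusionInDoubleDual ℝ X))
    (Y : Submodule ℝ X) (hY : IsClosed (Y : Set X)) :
    Function.Surjective (inclusionInDoubleDual ℝ Y) := by
  intro G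
  -- the composition φ ↦ G (φ|_Y) is an element of X**
  set R : StrongDual ℝ X →ₗ[ℝ] StrongDual ℝ Y :=
    { toFun := fun φ => φ.comp Y.subtypeL
      map_add' := fun φ ψ => by ext y; simp
      map_smul' := fun c φ => by ext y; simp } with hR
  have hRnorm : ∀ φ : StrongDual ℝ X, ‖R φ‖ ≤ ‖φ‖ := by
    intro φ
    refine ContinuousLinearMap.opNorm_le_bound _ (norm_nonneg φ) (fun y => ?_)
    calc ‖(R φ) y‖ = ‖φ y‖ := rfl
      _ ≤ ‖φ‖ * ‖(y : X)‖ := φ.le_opNorm _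
      _ = ‖φ‖ * ‖y‖ := rfl
  set H : StrongDual ℝ X →ₗ[ℝ] ℝ :=
    { toFun := fun φ => G (R φ)
      map_add' := fun φ ψ => by simp
      map_smul' := fun c φ => by simp } with hH
  have hHb : ∀ φ : StrongDual ℝ X, ‖H φ‖ ≤ ‖G‖ * ‖φ‖ := by
    intro φ
    calc ‖H φ‖ = ‖G (R φ)‖ := rfl
      _ ≤ ‖G‖ * ‖R φ‖ := G.le_opNorm _
      _ ≤ ‖G‖ * ‖φ‖ := mul_le_mul_of_nonneg_left (hRnorm φ) (norm_nonneg G)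
  obtain ⟨x, hxG⟩ := hrefl (H.mkContinuous ‖G‖ hHb)
  have hx' : ∀ φ : StrongDual ℝ X, φ x = G (φ.comp Y.subtypeL) := by
    intro φ
    have := congrArg (fun T : StrongDual ℝ (StrongDual ℝ X) => T φ) hxG
    simp only [dual_def] at this
    exact this
  have hxY : x ∈ Y := by
    by_contra hx
    obtain ⟨f, hfY, hfx⟩ := exists_functional_vanishing Y hY hx
    have h1 : f.comp Y.subtypeL = 0 := by
      ext y; exact hfY y y.2
    have := hx' f
    rw [h1] at this
    simp at this
    rw [this] at hfx
    exact lt_irrefl 0 hfx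
  refine ⟨⟨x, hxY⟩, ?_⟩
  ext ψ
  obtain ⟨φ, hφ, _⟩ := exists_extension_norm_eq Y ψ
  have h2 : φ.comp Y.subtypeL = ψ := by ext y; exact hφ y
  rw [dual_def, ← h2, ← hx' φ]
  rfl


lemma diagonal_subseq (g : ℕ → ℕ → ℝ) (M : ℕ → ℝ) (hb : ∀ k n, |g k n| ≤ M k) :
    ∃ σ : ℕ → ℕ, StrictMono σ ∧ ∀ k, ∃ l : ℝ, Tendsto (fun n => g k (σ n)) atTop (𝓝 l) := by
  have hmem : ∀ n, (fun k => g k n) ∈ Set.pi Set.univ (fun k => Set.Icc (-(M k)) (M k)) := by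
    intro n k _
    exact abs_le.1 (hb k n)
  obtain ⟨l, _, σ, hσ, hconv⟩ :=
    (isCompact_univ_pi (fun k => isCompact_Icc)).tendsto_subseq hmem
  exact ⟨σ, hσ, fun k => ⟨l k, (tendsto_pi_nhds.1 hconv) k⟩⟩

/-- Bounded sequences in a reflexive space have weakly convergent subsequences. -/
lemma weak_seq_compact {X : Type*} [NormedAddCommGroup X] [NormedSpace ℝ X]
    (hrefl : Function.Surjective (inclusionInDoubleDual ℝ X))
    (v : ℕ → X) (M : ℝ) (hb : ∀ n, ‖v n‖ ≤ M) :
    ∃ (σ : ℕ → ℕ) (x : X), StrictMono σ ∧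
      ∀ φ : X →L[ℝ] ℝ, Tendsto (fun n => φ (v (σ n))) atTop (𝓝 (φ x)) := by
  have hM0 : 0 ≤ M := le_trans (norm_nonneg (v 0)) (hb 0)
  set Y : Submodule ℝ X := (Submodule.span ℝ (Set.range v)).topologicalClosure with hYdef
  have hYcl : IsClosed (Y : Set X) := Submodule.isClosed_topologicalClosure _
  have hvY : ∀ n, v n ∈ Y := fun n =>
    (Submodule.le_topologicalClosure _) (Submodule.subset_span ⟨n, rfl⟩)
  have hYsep : SeparableSpace Y := by
    have h1 : IsSeparable (Y : Set X) := by
      rw [hYdef, Submodule.topologicalClosure_coe]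
      exact ((Set.countable_range v).isSeparable.span).closure
    exact h1.separableSpace
  have hYrefl := subspace_reflexive hrefl Y hYcl
  have hYY : SeparableSpace (StrongDual ℝ (StrongDual ℝ ↥Y)) := by
    have h2 : DenseRange (inclusionInDoubleDual ℝ ↥Y) :=
      hYrefl.denseRange
    exact h2.separableSpace (inclusionInDoubleDual ℝ ↥Y).continuous
  have hYdsep : SeparableSpace (StrongDual ℝ ↥Y) := separable_of_dual_separable (Z := StrongDual ℝ ↥Y)
  obtain ⟨D, hDc, hDd⟩ := exists_countable_dense (StrongDual ℝ ↥Y)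
  obtain ⟨Ψ, hΨ⟩ := hDc.exists_eq_range hDd.nonempty
  set vY : ℕ → Y := fun n => ⟨v n, hvY n⟩ with hvYdef
  have hvYnorm : ∀ n, ‖vY n‖ ≤ M := fun n => hb n
  obtain ⟨σ, hσ, hconv⟩ := diagonal_subseq (fun k n => Ψ k (vY n)) (fun k => ‖Ψ k‖ * M)
    (fun k n => by
      calc |Ψ k (vY n)| = ‖Ψ k (vY n)‖ := rfl
        _ ≤ ‖Ψ k‖ * ‖vY n‖ := (Ψ k).le_opNorm _
        _ ≤ ‖Ψ k‖ * M := mul_le_mul_of_nonneg_left (hvYnorm n) (Ψ k).opNorm_nonneg)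
  have key : ∀ ψ : StrongDual ℝ ↥Y, ∃ l, Tendsto (fun n => ψ (vY (σ n))) atTop (𝓝 l) := by
    intro ψ
    apply cauchySeq_tendsto_of_complete
    rw [Metric.cauchySeq_iff]
    intro ε hε
    have hM1 : (0:ℝ) < M + 1 := by linarith
    have hε3 : 0 < ε / (3 * (M + 1)) := by positivity
    obtain ⟨g, hgD, hgd⟩ := hDd.exists_dist_lt ψ hε3
    rw [hΨ] at hgD
    obtain ⟨k, rfl⟩ := hgD
    obtain ⟨l, hl⟩ := hconv k
    have hcs : CauchySeq (fun n => Ψ k (vY (σ n))) := hl.cauchySeq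
    rw [Metric.cauchySeq_iff] at hcs
    obtain ⟨N, hN⟩ := hcs (ε/3) (by positivity)
    refine ⟨N, fun m hm n hn => ?_⟩
    have hdiff : ∀ j, |ψ (vY (σ j)) - Ψ k (vY (σ j))| ≤ ε/3 := by
      intro j
      calc |ψ (vY (σ j)) - Ψ k (vY (σ j))| = ‖(ψ - Ψ k) (vY (σ j))‖ := by
            rw [ContinuousLinearMap.sub_apply]; rfl
        _ ≤ ‖ψ - Ψ k‖ * ‖vY (σ j)‖ := (ψ - Ψ k).le_opNorm _
        _ ≤ (ε / (3 * (M + 1))) * (M + 1) := by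
            apply mul_le_mul (by exact (dist_eq_norm ψ (Ψ k)).symm.le.trans hgd.le)
              (le_trans (hvYnorm _) (by linarith)) (norm_nonneg _) hε3.le
        _ = ε/3 := by field_simp
    have h5 := hN m hm n hn
    rw [Real.dist_eq] at h5 ⊢
    have d1 := hdiff m
    have d2 := hdiff n
    have : ψ (vY (σ m)) - ψ (vY (σ n)) =
        (ψ (vY (σ m)) - Ψ k (vY (σ m))) + (Ψ k (vY (σ m)) - Ψ k (vY (σ n)))
        + (Ψ k (vY (σ n)) - ψ (vY (σ n))) := by ring
    rw [this]
    calc |_ + _ + _| ≤ |ψ (vY (σ m)) - Ψ k (vY (σ m))| + |Ψ k (vY (σ m)) - Ψ k (vY (σ n))|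
          + |Ψ k (vY (σ n)) - ψ (vY (σ n))| := abs_add_three _ _ _
      _ < ε/3 + ε/3 + ε/3 := by
          rw [abs_sub_comm (Ψ k (vY (σ n)))]
          have := abs_sub_comm (ψ (vY (σ m))) (Ψ k (vY (σ m)))
          refine add_lt_add_of_lt_of_le (add_lt_add_of_le_of_lt d1 h5) d2 |>.trans_le ?_
          linarith
      _ = ε := by ring
  -- limit functional
  have keyX : ∀ φ : StrongDual ℝ X, ∃ l, Tendsto (fun n => φ (v (σ n))) atTop (𝓝 l) := by
    intro φ
    obtain ⟨l, hl⟩ := key (φ.comp Y.subtypeL)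
    exact ⟨l, hl⟩
  choose F hF using keyX
  have hFadd : ∀ φ ψ : StrongDual ℝ X, F (φ + ψ) = F φ + F ψ := by
    intro φ ψ
    have h1 : Tendsto (fun n => (φ + ψ) (v (σ n))) atTop (𝓝 (F φ + F ψ)) := by
      have := (hF φ).add (hF ψ)
      simpa using this
    exact tendsto_nhds_unique (hF (φ + ψ)) h1
  have hFsmul : ∀ (c : ℝ) (φ : StrongDual ℝ X), F (c • φ) = c * F φ := by
    intro c φ
    have h1 : Tendsto (fun n => (c • φ) (v (σ n))) atTop (𝓝 (c * F φ)) := by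
      have := (hF φ).const_mul c
      simpa using this
    exact tendsto_nhds_unique (hF (c • φ)) h1
  have hFb : ∀ φ : StrongDual ℝ X, ‖F φ‖ ≤ M * ‖φ‖ := by
    intro φ
    refine le_of_tendsto' (hF φ).norm (fun n => ?_)
    calc ‖φ (v (σ n))‖ ≤ ‖φ‖ * ‖v (σ n)‖ := φ.le_opNorm _
      _ ≤ ‖φ‖ * M := mul_le_mul_of_nonneg_left (hb _) (norm_nonneg _)
      _ = M * ‖φ‖ := mul_comm _ _
  set Flin : StrongDual ℝ X →ₗ[ℝ] ℝ :=
    { toFun := F, map_add' := hFadd, map_smul' := hFsmul } with hFlin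
  obtain ⟨x, hxF⟩ := hrefl (Flin.mkContinuous M hFb)
  refine ⟨σ, x, hσ, fun φ => ?_⟩
  have h6 : φ x = F φ := by
    have := congrArg (fun T : StrongDual ℝ (StrongDual ℝ X) => T φ) hxF
    exact (by simpa [dual_def] using this : φ x = Flin φ)
  rw [h6]
  exact hF φ


/-- Ekeland's variational principle, sequential-lsc version. -/
lemma ekeland_seq {X : Type*} [NormedAddCommGroup X] [NormedSpace ℝ X] [CompleteSpace X]
    {A : Set X} (hA : IsClosed A) (f : X → ℝ) (B : ℝ)
    (hlb : ∀ y ∈ A, B ≤ f y)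
    (hlsc : ∀ z ∈ A, ∀ u : ℕ → X, (∀ n, u n ∈ A) → Tendsto u atTop (𝓝 z) →
      ∀ b, b < f z → ∀ᶠ n in atTop, b < f (u n))
    {ε : ℝ} (hε : 0 < ε) {x₀ : X} (hx₀ : x₀ ∈ A) :
    ∃ xs ∈ A, f xs ≤ f x₀ ∧ ε * ‖xs - x₀‖ ≤ f x₀ - f xs ∧
      ∀ y ∈ A, f xs - ε * ‖xs - y‖ ≤ f y := by
  classical
  set S : X → Set X := fun x => {z | z ∈ A ∧ f z + ε * ‖z - x‖ ≤ f x} with hS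
  have hmemS : ∀ x ∈ A, x ∈ S x := by
    intro x hx
    refine ⟨hx, ?_⟩
    simp
  have hbdd : ∀ x, BddBelow (f '' S x) := by
    intro x
    exact ⟨B, by rintro y ⟨z, hz, rfl⟩; exact hlb z hz.1⟩
  have hstep : ∀ (n : ℕ) (x : X), x ∈ A → ∃ y, (y ∈ A ∧ f y + ε * ‖y - x‖ ≤ f x) ∧
      f y ≤ sInf (f '' S x) + (1/2 : ℝ)^n := by
    intro n x hx
    have hne : (f '' S x).Nonempty := ⟨f x, x, hmemS x hx, rfl⟩
    have h1 : sInf (f '' S x) < sInf (f '' S x) + (1/2:ℝ)^n := by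
      have : (0:ℝ) < (1/2:ℝ)^n := by positivity
      linarith
    obtain ⟨b, hbmem, hblt⟩ := exists_lt_of_csInf_lt hne h1
    obtain ⟨z, hzS, rfl⟩ := hbmem
    exact ⟨z, hzS, hblt.le⟩
  choose g hg1 hg2 using hstep
  set u : ℕ → {x : X // x ∈ A} := fun n =>
    Nat.rec ⟨x₀, hx₀⟩ (fun n p => ⟨g n p.1 p.2, (hg1 n p.1 p.2).1⟩) n with hu
  have hu0 : (u 0 : X) = x₀ := rfl
  have hustep : ∀ n, (u (n+1) : X) = g n (u n).1 (u n).2 := fun n => rfl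
  have hdec : ∀ n, f (u (n+1)) + ε * ‖(u (n+1) : X) - u n‖ ≤ f (u n) := by
    intro n
    rw [hustep n]
    exact (hg1 n (u n).1 (u n).2).2
  have hmono : ∀ m n, m ≤ n → f (u n) + ε * ‖(u n : X) - u m‖ ≤ f (u m) := by
    intro m n hmn
    induction n with
    | zero => interval_cases m; simp
    | succ k ih =>
      rcases Nat.lt_or_ge m (k+1) with h | h
      · have h1 := ih (Nat.lt_succ_iff.1 h)
        have h2 := hdec k
        have h3 : ‖(u (k+1) : X) - u m‖ ≤ ‖(u (k+1) : X) - u k‖ + ‖(u k : X) - u m‖ :=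
          norm_sub_le_norm_sub_add_norm_sub _ _ _
        nlinarith [hε.le]
      · have : m = k + 1 := le_antisymm hmn h
        subst this; simp
  have hlbu : ∀ n, B ≤ f (u n) := fun n => hlb _ (u n).2
  have hfmono : Antitone (fun n => f (u n)) := by
    apply antitone_nat_of_succ_le
    intro n
    have := hdec n
    nlinarith [norm_nonneg ((u (n+1) : X) - u n), hε.le]
  obtain ⟨l, hl⟩ : ∃ l, Tendsto (fun n => f (u n)) atTop (𝓝 l) :=
    ⟨_, tendsto_atTop_ciInf hfmono ⟨B, by rintro y ⟨n, rfl⟩; exact hlbu n⟩⟩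
  have hcauchy : CauchySeq (fun n => (u n : X)) := by
    rw [Metric.cauchySeq_iff]
    intro η hη
    have hfc := hl.cauchySeq
    rw [Metric.cauchySeq_iff] at hfc
    obtain ⟨N, hN⟩ := hfc (ε * η) (by positivity)
    refine ⟨N, fun m hm n hn => ?_⟩
    have h2 := hN m hm n hn
    rw [Real.dist_eq] at h2
    rw [dist_eq_norm]
    rcases le_total n m with h | h
    · have h1 := hmono n m h
      have h5 : ε * ‖(u m : X) - u n‖ ≤ f (u n) - f (u m) := by linarith
      have h6 : f (u n) - f (u m) < ε * η := by
        rcases abs_lt.1 h2 with ⟨ha, _⟩; linarith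
      exact lt_of_mul_lt_mul_left (lt_of_le_of_lt h5 h6) hε.le
    · have h1 := hmono m n h
      have h5 : ε * ‖(u n : X) - u m‖ ≤ f (u m) - f (u n) := by linarith
      have h6 : f (u m) - f (u n) < ε * η := by
        rcases abs_lt.1 h2 with ⟨_, ha⟩; linarith
      have h8 : ‖(u n : X) - u m‖ < η := lt_of_mul_lt_mul_left (lt_of_le_of_lt h5 h6) hε.le
      rwa [norm_sub_rev] at h8
  obtain ⟨xs, hxs⟩ := cauchySeq_tendsto_of_complete hcauchy
  have hxsA : xs ∈ A := hA.mem_of_tendsto hxs (Eventually.of_forall fun n => (u n).2)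
  -- f xs ≤ l
  have hfxs : f xs ≤ l := by
    by_contra hc
    push_neg at hc
    obtain ⟨b, hb1, hb2⟩ := exists_between hc
    have := hlsc xs hxsA (fun n => u n) (fun n => (u n).2) hxs b hb2
    have hble : b ≤ l := ge_of_tendsto hl (this.mono fun n hn => hn.le)
    linarith
  -- key inequality at the limit
  have hkey : ∀ m, f xs + ε * ‖xs - u m‖ ≤ f (u m) := by
    intro m
    have h1 : Tendsto (fun n => f (u n) + ε * ‖(u n : X) - u m‖) atTop
        (𝓝 (l + ε * ‖xs - (u m : X)‖)) := by
      apply hl.add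
      exact (((hxs.sub tendsto_const_nhds).norm).const_mul ε)
    have h2 : l + ε * ‖xs - (u m : X)‖ ≤ f (u m) := by
      apply le_of_tendsto h1
      filter_upwards [eventually_ge_atTop m] with n hn
      exact hmono m n hn
    linarith
  refine ⟨xs, hxsA, ?_, ?_, ?_⟩
  · have := hkey 0
    rw [hu0] at this
    nlinarith [norm_nonneg (xs - x₀), hε.le]
  · have := hkey 0
    rw [hu0] at this
    linarith
  · intro y hy
    by_contra hc
    push_neg at hc
    have hySn : ∀ n, y ∈ S (u n : X) := by
      intro n
      refine ⟨hy, ?_⟩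
      have h3 : ‖y - (u n : X)‖ ≤ ‖y - xs‖ + ‖xs - (u n : X)‖ :=
        norm_sub_le_norm_sub_add_norm_sub _ _ _
      have h4 := hkey n
      have h5 : ‖xs - y‖ = ‖y - xs‖ := norm_sub_rev _ _
      nlinarith [hε.le]
    have h6 : ∀ n, f (u (n+1)) ≤ f y + (1/2:ℝ)^n := by
      intro n
      have h7 := hg2 n (u n).1 (u n).2
      have h8 : f y ∈ f '' S (u n : X) := ⟨y, hySn n, rfl⟩
      have h9 : sInf (f '' S (u n : X)) ≤ f y := csInf_le (hbdd _) h8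
      rw [← hustep n] at h7
      linarith
    have h10 : l ≤ f y := by
      have h11 : Tendsto (fun n => f (u (n+1))) atTop (𝓝 l) :=
        hl.comp (tendsto_add_atTop_nat 1)
      have h12 : Tendsto (fun n => f y + (1/2:ℝ)^n) atTop (𝓝 (f y + 0)) := by
        apply tendsto_const_nhds.add
        exact tendsto_pow_atTop_nhds_zero_of_lt_one (by norm_num) (by norm_num)
      rw [add_zero] at h12
      exact le_of_tendsto_of_tendsto' h11 h12 h6
    nlinarith [norm_nonneg (xs - y), hε.le]

set_option maxHeartbeats 1600000 in
/-- Under assumptions (A1)–(A6), with `c₀ = inf_N J` where `N` is the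
Nehari–Pankov manifold of `J`, one has `c₀ ≥ a > 0` and `J` has a `(PS)_{c₀}`-sequence in `N`. -/
theorem groundstate_PS_sequence
    {X : Type*} [NormedAddCommGroup X] [NormedSpace ℝ X] [CompleteSpace X]
    -- X is reflexive
    (hrefl : Function.Surjective (NormedSpace.inclusionInDoubleDual ℝ X))
    -- topological direct sum decomposition X = X⁺ ⊕ X̃, with projection P onto X⁺ along X̃
    (Xp Xt : Submodule ℝ X)
    (hXpcl : IsClosed (Xp : Set X)) (hXtcl : IsClosed (Xt : Set X))
    (P : X →L[ℝ] X)
    (hPm : ∀ x : X, P x ∈ Xp) (hQm : ∀ x : X, x - P x ∈ Xt)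
    (hPp : ∀ x ∈ Xp, P x = x) (hPt : ∀ x ∈ Xt, P x = 0)
    -- ‖u‖² = ‖u⁺‖² + ‖ũ‖²
    (hnorm : ∀ x : X, ‖x‖ ^ 2 = ‖P x‖ ^ 2 + ‖x - P x‖ ^ 2)
    -- u ↦ ‖u‖² is C¹ on X⁺
    (hC1 : ContDiffOn ℝ 1 (fun x : X => ‖x‖ ^ 2) (Xp : Set X))
    -- J, I of class C¹ with J(u) = ½‖u⁺‖² - I(u)
    (J I : X → ℝ) (J' I' : X → X →L[ℝ] ℝ)
    (hJd : ∀ x, HasFDerivAt J (J' x) x) (hJ'c : Continuous J')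
    (hId : ∀ x, HasFDerivAt I (I' x) x) (hI'c : Continuous I')
    (hJI : ∀ x : X, J x = (1 / 2) * ‖P x‖ ^ 2 - I x)
    -- (A1)
    (hI0 : I 0 = 0) (hIpos : ∀ x : X, 0 ≤ I x)
    -- (A2) : T-convergence implies liminf I(uₙ) ≥ I(v)
    (hA2 : ∀ (u : ℕ → X) (v : X),
      Tendsto (fun n => P (u n)) atTop (𝓝 (P v)) →
      (∀ φ : X →L[ℝ] ℝ, Tendsto (fun n => φ (u n - P (u n))) atTop (𝓝 (φ (v - P v)))) →
      ∀ b : ℝ, b < I v → ∀ᶠ n in atTop, b < I (u n))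
    -- (A3)
    (hA3 : ∀ (u : ℕ → X) (v : X),
      Tendsto (fun n => P (u n)) atTop (𝓝 (P v)) →
      (∀ φ : X →L[ℝ] ℝ, Tendsto (fun n => φ (u n - P (u n))) atTop (𝓝 (φ (v - P v)))) →
      Tendsto (fun n => I (u n)) atTop (𝓝 (I v)) →
      Tendsto u atTop (𝓝 v))
    -- (A4)
    (r a : ℝ) (hr : 0 < r)
    (ha_def : a = sInf (J '' {x : X | x ∈ Xp ∧ ‖x‖ = r})) (ha : 0 < a)
    -- (A5) : m̂(u) is the unique nontrivial critical point of J|_{X(u)} in X̂(u), and the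
    -- unique global maximum of J on X̂(u)
    (m : X → X)
    (hm_mem : ∀ u ∉ Xt, ∃ t : ℝ, 0 ≤ t ∧ ∃ v ∈ Xt, m u = t • u + v)
    (hm_ne : ∀ u ∉ Xt, m u ≠ 0)
    (hm_crit : ∀ u ∉ Xt, ∀ z : X, (∃ t : ℝ, ∃ v ∈ Xt, z = t • u + v) → J' (m u) z = 0)
    (hm_unique : ∀ u ∉ Xt, ∀ w : X, (∃ t : ℝ, 0 ≤ t ∧ ∃ v ∈ Xt, w = t • u + v) → w ≠ 0 →
      (∀ z : X, (∃ t : ℝ, ∃ v ∈ Xt, z = t • u + v) → J' w z = 0) → w = m u)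
    (hm_max : ∀ u ∉ Xt, ∀ w : X, (∃ t : ℝ, 0 ≤ t ∧ ∃ v ∈ Xt, w = t • u + v) →
      w ≠ m u → J w < J (m u))
    -- (A6)
    (δ : ℝ) (hδ : 0 < δ) (hm_lb : ∀ u ∉ Xt, δ ≤ ‖P (m u)‖)
    (hm_bdd : ∀ K : Set X, IsCompact K → (∀ x ∈ K, x ∉ Xt) →
      Bornology.IsBounded (m '' K)) :
    0 < a ∧
    a ≤ sInf (J '' {u : X | u ∉ Xt ∧ J' u u = 0 ∧ ∀ v ∈ Xt, J' u v = 0}) ∧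
    ∃ u : ℕ → X,
      (∀ n, (u n) ∈ {u : X | u ∉ Xt ∧ J' u u = 0 ∧ ∀ v ∈ Xt, J' u v = 0}) ∧
      Tendsto (fun n => J (u n)) atTop
        (𝓝 (sInf (J '' {u : X | u ∉ Xt ∧ J' u u = 0 ∧ ∀ v ∈ Xt, J' u v = 0}))) ∧
      Tendsto (fun n => ‖J' (u n)‖) atTop (𝓝 0) := by
  classical
  set Nset : Set X := {u : X | u ∉ Xt ∧ J' u u = 0 ∧ ∀ v ∈ Xt, J' u v = 0} with hNset
  -- basic facts about the projection
  have hPxt : ∀ x : X, x ∈ Xt ↔ P x = 0 := by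
    intro x
    constructor
    · exact hPt x
    · intro h
      have := hQm x
      rwa [h, sub_zero] at this
  have hPP : ∀ x : X, P (P x) = P x := fun x => hPp (P x) (hPm x)
  have hPnorm : ∀ x : X, ‖P x‖ ≤ ‖x‖ := by
    intro x
    nlinarith [hnorm x, norm_nonneg (P x), norm_nonneg x, norm_nonneg (x - P x)]
  have hJcont : Continuous J :=
    continuous_iff_continuousAt.2 fun x => (hJd x).continuousAt
  -- the sphere set
  have hSne : {x : X | x ∈ Xp ∧ ‖x‖ = r}.Nonempty ∧ BddBelow (J '' {x : X | x ∈ Xp ∧ ‖x‖ = r}) := by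
    constructor
    · by_contra hc
      rw [Set.not_nonempty_iff_eq_empty] at hc
      rw [ha_def, hc, Set.image_empty, Real.sInf_empty] at ha
      exact lt_irrefl 0 ha
    · by_contra hc
      rw [ha_def, Real.sInf_of_not_bddBelow hc] at ha
      exact lt_irrefl 0 ha
  have haJ : ∀ x ∈ Xp, ‖x‖ = r → a ≤ J x := by
    intro x hx hxr
    rw [ha_def]
    exact csInf_le hSne.2 ⟨x, ⟨hx, hxr⟩, rfl⟩
  -- m u is not in Xt
  have hmXt : ∀ u ∉ Xt, m u ∉ Xt := by
    intro u hu hc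
    have h1 := hm_lb u hu
    rw [(hPxt (m u)).1 hc, norm_zero] at h1
    linarith
  have hmPne : ∀ u ∉ Xt, P (m u) ≠ 0 := by
    intro u hu hc
    have h1 := hm_lb u hu
    rw [hc, norm_zero] at h1
    linarith
  -- m u belongs to the Nehari set
  have hmN : ∀ u ∉ Xt, m u ∈ Nset := by
    intro u hu
    refine ⟨hmXt u hu, ?_, ?_⟩
    · obtain ⟨t, ht, v, hv, heq⟩ := hm_mem u hu
      exact hm_crit u hu (m u) ⟨t, v, hv, heq⟩
    · intro v hv
      exact hm_crit u hu v ⟨0, v, hv, by simp⟩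
  -- members of Nset are fixed by m
  have hNm : ∀ u ∈ Nset, m u = u := by
    intro u hu
    have hune : u ≠ 0 := by
      intro h; rw [h] at hu; exact hu.1 Xt.zero_mem
    refine (hm_unique u hu.1 u ⟨1, zero_le_one, 0, Xt.zero_mem, by simp⟩ hune ?_).symm
    rintro z ⟨t, v, hv, rfl⟩
    rw [map_add, map_smul]
    rw [hu.2.1, hu.2.2 v hv]
    simp
  -- J is bounded below by a on Nset
  have hJm_ge : ∀ u, u ∉ Xt → ∀ w, (∃ t : ℝ, 0 ≤ t ∧ ∃ v ∈ Xt, w = t • u + v) → J w ≤ J (m u) := by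
    intro u hu w hw
    by_cases hweq : w = m u
    · rw [hweq]
    · exact (hm_max u hu w hw hweq).le
  have hNge : ∀ u ∈ Nset, a ≤ J u := by
    intro u hu
    have hmu : m u = u := hNm u hu
    have hPu : P u ≠ 0 := by
      have := hmPne u hu.1; rwa [hmu] at this
    have hPun : 0 < ‖P u‖ := norm_pos_iff.2 hPu
    set w : X := (r / ‖P u‖) • P u with hw
    have hwXp : w ∈ Xp := Xp.smul_mem _ (hPm u)
    have hwn : ‖w‖ = r := by
      rw [hw, norm_smul, Real.norm_eq_abs, abs_of_pos (by positivity), div_mul_cancel₀ _ hPun.ne']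
    have h1 : a ≤ J w := haJ w hwXp hwn
    have h2 : J w ≤ J (m u) := by
      apply hJm_ge u hu.1
      refine ⟨r / ‖P u‖, by positivity, -((r / ‖P u‖) • (u - P u)), Xt.neg_mem (Xt.smul_mem _ (hQm u)), ?_⟩
      rw [hw, smul_sub]
      abel
    rw [hmu] at h2
    linarith
  have hNne : Nset.Nonempty := by
    obtain ⟨x₀, hx₀p, hx₀r⟩ := hSne.1
    have hx₀t : x₀ ∉ Xt := by
      intro hc
      have h1 : P x₀ = 0 := (hPxt x₀).1 hc
      rw [hPp x₀ hx₀p] at h1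
      rw [h1, norm_zero] at hx₀r
      exact hr.ne hx₀r
    exact ⟨m x₀, hmN x₀ hx₀t⟩
  have hbddN : BddBelow (J '' Nset) := ⟨a, by rintro y ⟨u, hu, rfl⟩; exact hNge u hu⟩
  set c₀ : ℝ := sInf (J '' Nset) with hc₀
  have hc₀a : a ≤ c₀ := le_csInf (hNne.image J) (by rintro y ⟨u, hu, rfl⟩; exact hNge u hu)
  have hc₀le : ∀ u ∈ Nset, c₀ ≤ J u := fun u hu => csInf_le hbddN ⟨u, hu, rfl⟩
  -- scaling invariance of m on Nset
  have hmEq : ∀ u' ∈ Nset, ∀ c : ℝ, 0 < c → m (c • P u') = u' := by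
    intro u' hu' c hc
    have hPu' : P u' ≠ 0 := by have := hmPne u' hu'.1; rwa [hNm u' hu'] at this
    have hbase : c • P u' ∉ Xt := by
      intro hmem
      have h1 := (hPxt _).1 hmem
      rw [map_smul, hPP] at h1
      rcases smul_eq_zero.1 h1 with h | h
      · exact hc.ne' h
      · exact hPu' h
    have hu'ne : u' ≠ 0 := fun h => hu'.1 (h ▸ Xt.zero_mem)
    refine (hm_unique (c • P u') hbase u' ⟨1/c, by positivity, u' - P u', hQm u', ?_⟩ hu'ne ?_).symm
    · rw [smul_smul, one_div, inv_mul_cancel₀ hc.ne', one_smul]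
      abel
    · rintro z ⟨t, v, hv, rfl⟩
      have hz : t • (c • P u') + v = (t*c) • u' + (v - (t*c) • (u' - P u')) := by
        rw [smul_smul, smul_sub]
        abel
      rw [hz, map_add, map_smul, hu'.2.1,
        (show J' u' (v - (t*c) • (u' - P u')) = 0 from
          hu'.2.2 _ (Xt.sub_mem hv (Xt.smul_mem _ (hQm u'))))]
      simp
  -- the key claim
  have key : ∀ ε : ℝ, 0 < ε → ∃ u ∈ Nset, J u ≤ c₀ + ε ∧ ‖J' u‖ ≤ 3 * ε / δ := by
    intro ε hε
    set A : Set X := {w : X | w ∈ Xp ∧ 1 ≤ ‖w‖ ∧ ‖w‖ ≤ 3} with hAdef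
    have hAcl : IsClosed A := by
      have hAeq : A = (Xp : Set X) ∩ ({w : X | 1 ≤ ‖w‖} ∩ {w : X | ‖w‖ ≤ 3}) := by
        ext w
        simp only [hAdef, Set.mem_setOf_eq, Set.mem_inter_iff, SetLike.mem_coe, and_assoc]
      rw [hAeq]
      exact hXpcl.inter ((isClosed_le continuous_const continuous_norm).inter
        (isClosed_le continuous_norm continuous_const))
    have hAXt : ∀ w ∈ A, w ∉ Xt := by
      intro w hw hmem
      have h1 := (hPxt w).1 hmem
      rw [hPp w hw.1] at h1
      have h2 := hw.2.1
      rw [h1, norm_zero] at h2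
      linarith
    have hΨlb : ∀ w ∈ A, c₀ ≤ J (m w) := fun w hw => hc₀le _ (hmN w (hAXt w hw))
    have hΨlsc : ∀ z ∈ A, ∀ uu : ℕ → X, (∀ n, uu n ∈ A) → Tendsto uu atTop (𝓝 z) →
        ∀ b, b < J (m z) → ∀ᶠ n in atTop, b < J (m (uu n)) := by
      intro z hz uu huu htend b hb
      obtain ⟨t, ht, v, hv, heq⟩ := hm_mem z (hAXt z hz)
      have hc : Tendsto (fun n => J (t • uu n + v)) atTop (𝓝 (J (t • z + v))) :=
        (hJcont.tendsto _).comp ((htend.const_smul t).add tendsto_const_nhds)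
      rw [← heq] at hc
      filter_upwards [(tendsto_order.1 hc).1 b hb] with n hn
      exact lt_of_lt_of_le hn (hJm_ge (uu n) (hAXt _ (huu n)) _ ⟨t, ht, v, hv, rfl⟩)
    obtain ⟨y, ⟨u', hu'N, rfl⟩, hu'⟩ :=
      exists_lt_of_csInf_lt (hNne.image J) (show c₀ < c₀ + ε/2 by linarith)
    have hPu' : P u' ≠ 0 := by have := hmPne u' hu'N.1; rwa [hNm u' hu'N] at this
    have hPu'n : 0 < ‖P u'‖ := norm_pos_iff.2 hPu'
    set w₀ : X := (2 / ‖P u'‖) • P u' with hw₀def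
    have hw₀n : ‖w₀‖ = 2 := by
      rw [hw₀def, norm_smul, Real.norm_eq_abs, abs_of_pos (by positivity),
        div_mul_cancel₀ _ hPu'n.ne']
    have hw₀A : w₀ ∈ A := ⟨Xp.smul_mem _ (hPm u'), by rw [hw₀n]; norm_num,
      by rw [hw₀n]; norm_num⟩
    have hmw₀ : m w₀ = u' := hmEq u' hu'N _ (by positivity)
    obtain ⟨xs, hxsA, hxs1, hxs2, hxs3⟩ :=
      ekeland_seq hAcl (fun w => J (m w)) c₀ hΨlb hΨlsc hε hw₀A
    have hxsd : ‖xs - w₀‖ ≤ 1/2 := by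
      have h3 : J (m w₀) - J (m xs) ≤ ε/2 := by
        rw [hmw₀]
        have h4 := hΨlb xs hxsA
        linarith
      nlinarith
    have hxs_lo : 3/2 ≤ ‖xs‖ := by
      have h5 : ‖w₀‖ - ‖xs‖ ≤ ‖w₀ - xs‖ := norm_sub_norm_le _ _
      rw [norm_sub_rev] at h5
      rw [hw₀n] at h5
      linarith
    have hxs_hi : ‖xs‖ ≤ 5/2 := by
      have h5 : ‖xs‖ - ‖w₀‖ ≤ ‖xs - w₀‖ := norm_sub_norm_le _ _
      rw [hw₀n] at h5
      linarith
    have hxsXt : xs ∉ Xt := hAXt xs hxsA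
    have huN : m xs ∈ Nset := hmN xs hxsXt
    have hJu : J (m xs) ≤ c₀ + ε := by
      have h6 : J (m w₀) ≤ c₀ + ε/2 := by rw [hmw₀]; linarith
      linarith
    refine ⟨m xs, huN, hJu, ?_⟩
    -- the derivative estimate
    have claim : ∀ z, z ∈ Xp → -(3 * ε / δ) * ‖z‖ ≤ J' (m xs) z := by
      intro z hz
      rcases eq_or_ne z 0 with rfl | hzne
      · simp
      have hzn : 0 < ‖z‖ := norm_pos_iff.2 hzne
      set t₀ : ℝ := 1 / (4 * ‖z‖) with ht₀def
      have ht₀ : 0 < t₀ := by positivity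
      have ht₀z : t₀ * ‖z‖ = 1/4 := by
        rw [ht₀def]; field_simp
      set t : ℕ → ℝ := fun k => t₀ / (k + 1) with htdef
      have htpos : ∀ k, 0 < t k := fun k => by positivity
      have htle : ∀ k, t k ≤ t₀ := by
        intro k
        rw [htdef]
        apply div_le_self ht₀.le
        have : (0:ℝ) ≤ (k:ℝ) := Nat.cast_nonneg k
        linarith
      have htt : Tendsto t atTop (𝓝 0) := by
        have h1 := tendsto_one_div_add_atTop_nhds_zero_nat.const_mul t₀
        rw [mul_zero] at h1
        convert h1 using 2 with k
        rw [htdef]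
        field_simp
      set y : ℕ → X := fun k => xs + t k • z with hydef
      have hyXp : ∀ k, y k ∈ Xp := fun k => Xp.add_mem hxsA.1 (Xp.smul_mem _ hz)
      have hysmul : ∀ k, ‖t k • z‖ ≤ 1/4 := by
        intro k
        rw [norm_smul, Real.norm_eq_abs, abs_of_pos (htpos k)]
        calc t k * ‖z‖ ≤ t₀ * ‖z‖ := mul_le_mul_of_nonneg_right (htle k) hzn.le
          _ = 1/4 := ht₀z
      have hy_lo : ∀ k, 1 ≤ ‖y k‖ := by
        intro k
        have h1 : ‖xs‖ ≤ ‖y k‖ + ‖t k • z‖ := by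
          have hxseq : xs = y k + -(t k • z) := by
            show xs = (xs + t k • z) + -(t k • z)
            module
          calc ‖xs‖ = ‖y k + -(t k • z)‖ := by rw [← hxseq]
            _ ≤ ‖y k‖ + ‖-(t k • z)‖ := norm_add_le _ _
            _ = ‖y k‖ + ‖t k • z‖ := by rw [norm_neg]
        have := hysmul k
        linarith
      have hy_hi : ∀ k, ‖y k‖ ≤ 3 := by
        intro k
        have h1 : ‖y k‖ ≤ ‖xs‖ + ‖t k • z‖ := norm_add_le _ _
        have := hysmul k
        linarith
      have hyA : ∀ k, y k ∈ A := fun k => ⟨hyXp k, hy_lo k, hy_hi k⟩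
      have hyXt : ∀ k, y k ∉ Xt := fun k => hAXt _ (hyA k)
      -- compact segment and boundedness of m
      set K : Set X := (fun τ : ℝ => xs + τ • z) '' Icc 0 t₀ with hKdef
      have hKcomp : IsCompact K :=
        isCompact_Icc.image (continuous_const.add (continuous_id.smul continuous_const))
      have hKXt : ∀ p ∈ K, p ∉ Xt := by
        rintro p ⟨τ, hτ, rfl⟩ hmem
        have hpXp : xs + τ • z ∈ Xp := Xp.add_mem hxsA.1 (Xp.smul_mem _ hz)
        have h1 := (hPxt _).1 hmem
        rw [hPp _ hpXp] at h1
        have h2 : ‖τ • z‖ ≤ 1/4 := by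
          rw [norm_smul, Real.norm_eq_abs, abs_of_nonneg hτ.1]
          calc τ * ‖z‖ ≤ t₀ * ‖z‖ := mul_le_mul_of_nonneg_right hτ.2 hzn.le
            _ = 1/4 := ht₀z
        have h3 : ‖xs‖ ≤ ‖xs + τ • z‖ + ‖τ • z‖ := by
          have hxseq2 : xs = (xs + τ • z) + -(τ • z) := by module
          calc ‖xs‖ = ‖(xs + τ • z) + -(τ • z)‖ := by rw [← hxseq2]
            _ ≤ ‖xs + τ • z‖ + ‖-(τ • z)‖ := norm_add_le _ _
            _ = ‖xs + τ • z‖ + ‖τ • z‖ := by rw [norm_neg]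
        rw [h1, norm_zero] at h3
        linarith
      obtain ⟨M, hM⟩ := Bornology.IsBounded.exists_norm_le (hm_bdd K hKcomp hKXt)
      have hyK : ∀ k, y k ∈ K := fun k => ⟨t k, ⟨(htpos k).le, htle k⟩, rfl⟩
      have hxsK : xs ∈ K := ⟨0, ⟨le_rfl, ht₀.le⟩, by simp⟩
      have hMy : ∀ k, ‖m (y k)‖ ≤ M := fun k => hM _ ⟨y k, hyK k, rfl⟩
      have hMxs : ‖m xs‖ ≤ M := hM _ ⟨xs, hxsK, rfl⟩
      have hMδ : δ ≤ M := le_trans (hm_lb xs hxsXt) (le_trans (hPnorm _) hMxs)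
      have hMpos : 0 < M := lt_of_lt_of_le hδ hMδ
      -- decomposition of m (y k)
      have hdecomp : ∀ k, ∃ s : ℝ, 0 ≤ s ∧ ∃ v ∈ Xt, m (y k) = s • y k + v := fun k =>
        hm_mem _ (hyXt k)
      choose s hs0 v hvXt hmy using hdecomp
      have hPmy : ∀ k, P (m (y k)) = s k • y k := by
        intro k
        rw [hmy k, map_add, map_smul, hPp _ (hyXp k), (hPxt _).1 (hvXt k), add_zero]
      have hsn : ∀ k, s k * ‖y k‖ = ‖P (m (y k))‖ := by
        intro k
        rw [hPmy k, norm_smul, Real.norm_eq_abs, abs_of_nonneg (hs0 k)]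
      have hs_lo : ∀ k, δ/3 ≤ s k := by
        intro k
        have h1 := hm_lb (y k) (hyXt k)
        have h2 := hsn k
        have h3 := hy_hi k
        nlinarith [hs0 k]
      have hs_hi : ∀ k, s k ≤ M := by
        intro k
        have h1 := hsn k
        have h2 : ‖P (m (y k))‖ ≤ M := le_trans (hPnorm _) (hMy k)
        have h3 := hy_lo k
        nlinarith [hs0 k]
      -- Bolzano-Weierstrass for the scalars
      obtain ⟨sl, hslmem, σ₁, hσ₁, hsconv₁⟩ :=
        (isCompact_Icc (a := δ/3) (b := M)).tendsto_subseq (fun k => ⟨hs_lo k, hs_hi k⟩)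
      -- weak compactness for the Xt-components
      have hvb : ∀ k, ‖v (σ₁ k)‖ ≤ 4 * M := by
        intro k
        have h1 : v (σ₁ k) = m (y (σ₁ k)) - s (σ₁ k) • y (σ₁ k) := by
          rw [hmy (σ₁ k)]; abel
        rw [h1]
        calc ‖m (y (σ₁ k)) - s (σ₁ k) • y (σ₁ k)‖
            ≤ ‖m (y (σ₁ k))‖ + ‖s (σ₁ k) • y (σ₁ k)‖ := norm_sub_le _ _
          _ ≤ M + s (σ₁ k) * ‖y (σ₁ k)‖ := by
              rw [norm_smul, Real.norm_eq_abs, abs_of_nonneg (hs0 _)]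
              exact add_le_add_left (hMy _) _
          _ ≤ M + M * 3 := by
              have := hs_hi (σ₁ k)
              have := hy_hi (σ₁ k)
              have := hs0 (σ₁ k)
              nlinarith
          _ = 4 * M := by ring
      obtain ⟨σ₂, xt, hσ₂, hweak⟩ := weak_seq_compact hrefl (fun k => v (σ₁ k)) (4*M) hvb
      set σ : ℕ → ℕ := σ₁ ∘ σ₂ with hσdef
      have hσmono : StrictMono σ := hσ₁.comp hσ₂
      have hxtXt : xt ∈ Xt := by
        by_contra hc
        obtain ⟨f, hf0, hfpos⟩ := exists_functional_vanishing Xt hXtcl hc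
        have h1 : Tendsto (fun k => f (v (σ k))) atTop (𝓝 (f xt)) := hweak f
        have h2 : (fun k => f (v (σ k))) = fun _ => 0 := by
          funext k
          exact hf0 _ (hvXt _)
        rw [h2] at h1
        have := tendsto_nhds_unique h1 tendsto_const_nhds
        linarith
      set W : ℕ → X := fun k => m (y (σ k)) with hWdef
      have ht' : Tendsto (fun k => t (σ k)) atTop (𝓝 0) := htt.comp hσmono.tendsto_atTop
      have hyconv : Tendsto (fun k => y (σ k)) atTop (𝓝 xs) := by
        have h1 : Tendsto (fun k => t (σ k) • z) atTop (𝓝 ((0:ℝ) • z)) := ht'.smul_const z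
        rw [zero_smul] at h1
        have h2 : Tendsto (fun k => xs + t (σ k) • z) atTop (𝓝 (xs + 0)) :=
          tendsto_const_nhds.add h1
        rw [add_zero] at h2
        exact h2
      have hsconv : Tendsto (fun k => s (σ k)) atTop (𝓝 sl) :=
        hsconv₁.comp hσ₂.tendsto_atTop
      have hPW : Tendsto (fun k => P (W k)) atTop (𝓝 (sl • xs)) := by
        have h1 : (fun k => P (W k)) = fun k => s (σ k) • y (σ k) := by
          funext k; exact hPmy (σ k)
        rw [h1]
        exact hsconv.smul hyconv
      set ustar : X := sl • xs + xt with hustar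
      have hPustar : P ustar = sl • xs := by
        rw [hustar, map_add, map_smul, hPp xs hxsA.1, (hPxt xt).1 hxtXt, add_zero]
      have hT1 : Tendsto (fun k => P (W k)) atTop (𝓝 (P ustar)) := by
        rw [hPustar]; exact hPW
      have hT2 : ∀ φ : X →L[ℝ] ℝ,
          Tendsto (fun k => φ (W k - P (W k))) atTop (𝓝 (φ (ustar - P ustar))) := by
        intro φ
        have h1 : ∀ k, W k - P (W k) = v (σ k) := by
          intro k
          rw [hWdef]
          show m (y (σ k)) - P (m (y (σ k))) = v (σ k)
          rw [hPmy (σ k), hmy (σ k)]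
          abel
        have h2 : ustar - P ustar = xt := by rw [hPustar, hustar]; abel
        simp only [h1, h2]
        exact hweak φ
      -- upper and lower bounds on J (W k)
      have hnormconv : Tendsto (fun k => 1/2 * ‖P (W k)‖^2) atTop (𝓝 (1/2 * ‖P ustar‖^2)) :=
        ((hT1.norm.pow 2).const_mul _)
      have hupper : ∀ c, J ustar < c → ∀ᶠ k in atTop, J (W k) < c := by
        intro c hc
        set η : ℝ := (c - J ustar)/2 with hη
        have hηpos : 0 < η := by rw [hη]; linarith
        have hIlow := hA2 W ustar hT1 hT2 (I ustar - η) (by linarith)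
        have hPhigh : ∀ᶠ k in atTop, 1/2 * ‖P (W k)‖^2 < 1/2 * ‖P ustar‖^2 + η :=
          (tendsto_order.1 hnormconv).2 _ (by linarith)
        filter_upwards [hIlow, hPhigh] with k h1 h2
        rw [hJI]
        have h3 := hJI ustar
        linarith
      have hlower : ∀ b, b < J (m xs) → ∀ᶠ k in atTop, b < J (W k) := by
        intro b hb
        obtain ⟨ts, hts, vs, hvs, heqs⟩ := hm_mem xs hxsXt
        have hc : Tendsto (fun k => J (ts • y (σ k) + vs)) atTop (𝓝 (J (ts • xs + vs))) :=
          (hJcont.tendsto _).comp ((hyconv.const_smul ts).add tendsto_const_nhds)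
        rw [← heqs] at hc
        filter_upwards [(tendsto_order.1 hc).1 b hb] with k hk
        exact lt_of_lt_of_le hk (hJm_ge (y (σ k)) (hyXt _) _ ⟨ts, hts, vs, hvs, rfl⟩)
      have hustarJ : J (m xs) ≤ J ustar := by
        by_contra hlt
        push_neg at hlt
        set c : ℝ := (J ustar + J (m xs))/2 with hcdef
        have h1 := hupper c (by rw [hcdef]; linarith)
        have h2 := hlower c (by rw [hcdef]; linarith)
        obtain ⟨k, hk1, hk2⟩ := (h1.and h2).exists
        linarith
      have hustarEq : ustar = m xs := by
        by_contra hne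
        have := hm_max xs hxsXt ustar ⟨sl, le_trans (by positivity) hslmem.1, xt, hxtXt, rfl⟩ hne
        linarith
      have hJW : Tendsto (fun k => J (W k)) atTop (𝓝 (J (m xs))) := by
        rw [tendsto_order]
        constructor
        · exact hlower
        · intro c hc
          exact hupper c (by rw [hustarEq]; exact hc)
      have hIW : Tendsto (fun k => I (W k)) atTop (𝓝 (I (m xs))) := by
        have h1 : (fun k => I (W k)) = fun k => 1/2 * ‖P (W k)‖^2 - J (W k) := by
          funext k
          have := hJI (W k)
          linarith
        have h2 : I (m xs) = 1/2 * ‖P (m xs)‖^2 - J (m xs) := by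
          have := hJI (m xs)
          linarith
        rw [h1, h2]
        apply Tendsto.sub _ hJW
        have h3 : P ustar = P (m xs) := by rw [hustarEq]
        rw [← h3]
        exact hnormconv
      have hT1' : Tendsto (fun k => P (W k)) atTop (𝓝 (P (m xs))) := by
        rw [← hustarEq]; exact hT1
      have hT2' : ∀ φ : X →L[ℝ] ℝ,
          Tendsto (fun k => φ (W k - P (W k))) atTop (𝓝 (φ (m xs - P (m xs)))) := by
        intro φ
        have := hT2 φ
        rwa [hustarEq] at this
      have hWu : Tendsto W atTop (𝓝 (m xs)) := hA3 W (m xs) hT1' hT2' hIW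
      -- Ekeland inequality along the sequence
      have hEk : ∀ k, J (m xs) - ε * (t (σ k) * ‖z‖) ≤ J (W k) := by
        intro k
        have h1 := hxs3 (y (σ k)) (hyA (σ k))
        have h2 : ‖xs - y (σ k)‖ = t (σ k) * ‖z‖ := by
          rw [hydef]
          show ‖xs - (xs + t (σ k) • z)‖ = _
          rw [show xs - (xs + t (σ k) • z) = -(t (σ k) • z) by module, norm_neg, norm_smul,
            Real.norm_eq_abs, abs_of_pos (htpos _)]
        rw [h2] at h1
        exact h1
      have hMax : ∀ k, J (s (σ k) • xs + v (σ k)) ≤ J (m xs) :=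
        fun k => hJm_ge xs hxsXt _ ⟨s (σ k), hs0 _, v (σ k), hvXt _, rfl⟩
      -- mean value theorem step
      have hkey2 : ∀ k, ∃ ξ : X, ‖ξ - W k‖ ≤ M * ‖z‖ * t (σ k) ∧
          -(ε * ‖z‖) ≤ s (σ k) * J' ξ z := by
        intro k
        set cc : X := -((s (σ k) * t (σ k)) • z) with hccdef
        have hpath : ∀ τ : ℝ, HasDerivAt (fun τ : ℝ => J (W k + τ • cc)) (J' (W k + τ • cc) cc) τ := by
          intro τ
          have h1 : HasDerivAt (fun τ : ℝ => W k + τ • cc) cc τ := by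
            simpa using ((hasDerivAt_id τ).smul_const cc).const_add (W k)
          exact (hJd _).comp_hasDerivAt τ h1
        obtain ⟨θ, hθ, hslope⟩ := exists_hasDerivAt_eq_slope (fun τ => J (W k + τ • cc))
          (fun τ => J' (W k + τ • cc) cc) one_pos
          (fun τ _ => ((hpath τ).continuousAt).continuousWithinAt) (fun τ _ => hpath τ)
        have hWc : W k + (1:ℝ) • cc = s (σ k) • xs + v (σ k) := by
          rw [one_smul, hccdef, hWdef]
          show m (y (σ k)) + -((s (σ k) * t (σ k)) • z) = _
          rw [hmy (σ k), hydef]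
          show s (σ k) • (xs + t (σ k) • z) + v (σ k) + -((s (σ k) * t (σ k)) • z) = _
          rw [smul_add, smul_smul]
          abel
        have hW0 : W k + (0:ℝ) • cc = W k := by rw [zero_smul, add_zero]
        rw [hWc, hW0] at hslope
        have hval : J' (W k + θ • cc) cc = J (s (σ k) • xs + v (σ k)) - J (W k) := by
          rw [hslope]; ring
        have hcc : J' (W k + θ • cc) cc = -(s (σ k) * t (σ k)) * J' (W k + θ • cc) z := by
          rw [hccdef, map_neg, map_smul]
          simp [neg_mul]
        refine ⟨W k + θ • cc, ?_, ?_⟩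
        · rw [add_sub_cancel_left, norm_smul, hccdef, norm_neg, norm_smul, Real.norm_eq_abs,
            Real.norm_eq_abs, abs_of_pos (show (0:ℝ) < θ from hθ.1),
            abs_of_nonneg (mul_nonneg (hs0 _) (htpos _).le)]
          calc θ * (s (σ k) * t (σ k) * ‖z‖) ≤ 1 * (s (σ k) * t (σ k) * ‖z‖) := by
                exact mul_le_mul_of_nonneg_right (hθ.2.le)
                  (mul_nonneg (mul_nonneg (hs0 _) (htpos _).le) (norm_nonneg _))
            _ = s (σ k) * t (σ k) * ‖z‖ := one_mul _
            _ ≤ M * t (σ k) * ‖z‖ := by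
                nlinarith [mul_nonneg (mul_nonneg (sub_nonneg.2 (hs_hi (σ k)))
                  (htpos (σ k)).le) (norm_nonneg z)]
            _ = M * ‖z‖ * t (σ k) := by ring
        · have h5 : -(s (σ k) * t (σ k)) * J' (W k + θ • cc) z ≤ ε * (t (σ k) * ‖z‖) := by
            rw [← hcc, hval]
            have hM1 := hMax k
            have hE1 := hEk k
            linarith
          have ht2 := htpos (σ k)
          nlinarith [h5]
      choose ξ hξ1 hξ2 using hkey2
      have hξu : Tendsto ξ atTop (𝓝 (m xs)) := by
        have h1 : Tendsto (fun k => ξ k - W k) atTop (𝓝 0) := by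
          apply squeeze_zero_norm hξ1
          have h2 := ht'.const_mul (M * ‖z‖)
          rw [mul_zero] at h2
          exact h2
        have h3 := h1.add hWu
        rw [zero_add] at h3
        simpa using h3
      have hJ'cont : Continuous fun w : X => J' w z := by
        exact (ContinuousLinearMap.apply ℝ ℝ z).continuous.comp hJ'c
      have hJ'ξ : Tendsto (fun k => s (σ k) * J' (ξ k) z) atTop (𝓝 (sl * J' (m xs) z)) :=
        hsconv.mul ((hJ'cont.tendsto _).comp hξu)
      have hfinal : -(ε * ‖z‖) ≤ sl * J' (m xs) z :=
        ge_of_tendsto hJ'ξ (Eventually.of_forall hξ2)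
      -- conclude
      have hsl : δ/3 ≤ sl := hslmem.1
      rcases le_or_gt 0 (J' (m xs) z) with h | h
      · have h9 : (0:ℝ) ≤ (3 * ε / δ) * ‖z‖ := by positivity
        have h10 : -(3 * ε / δ) * ‖z‖ ≤ 0 := by rw [neg_mul]; linarith
        linarith
      · have h11 : δ * (-(J' (m xs) z)) ≤ 3 * (ε * ‖z‖) := by
          nlinarith [mul_le_mul_of_nonneg_right hsl (neg_nonneg.2 h.le)]
        have h12 : -(J' (m xs) z) ≤ 3 * ε * ‖z‖ / δ := by
          rw [le_div_iff₀ hδ]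
          nlinarith
        have h13 : -(3 * ε / δ) * ‖z‖ = -(3 * ε * ‖z‖ / δ) := by ring
        linarith [h13 ▸ (neg_le_neg h12)]
    -- from the claim to the operator norm bound
    have habs : ∀ z, z ∈ Xp → |J' (m xs) z| ≤ (3 * ε / δ) * ‖z‖ := by
      intro z hz
      have h1 := claim z hz
      have h2 := claim (-z) (Xp.neg_mem hz)
      rw [map_neg, norm_neg] at h2
      rw [abs_le]
      constructor <;> [linarith; linarith]
    refine ContinuousLinearMap.opNorm_le_bound _ (by positivity) (fun x => ?_)
    have h3 : J' (m xs) x = J' (m xs) (P x) := by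
      have h4 : x = P x + (x - P x) := by abel
      conv_lhs => rw [h4]
      rw [map_add, huN.2.2 _ (hQm x), add_zero]
    rw [Real.norm_eq_abs, h3]
    calc |J' (m xs) (P x)| ≤ (3*ε/δ) * ‖P x‖ := habs _ (hPm x)
      _ ≤ (3*ε/δ) * ‖x‖ := mul_le_mul_of_nonneg_left (hPnorm x) (by positivity)
  refine ⟨ha, hc₀a, ?_⟩
  have hkey' : ∀ n : ℕ, ∃ u ∈ Nset, J u ≤ c₀ + 1/(n+1) ∧ ‖J' u‖ ≤ 3 * (1/(n+1)) / δ := by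
    intro n
    exact key (1/(n+1)) (by positivity)
  choose u huN huJ huJ' using hkey'
  refine ⟨u, huN, ?_, ?_⟩
  · have h1 : Tendsto (fun n : ℕ => c₀ + 1/((n:ℝ)+1)) atTop (𝓝 (c₀ + 0)) :=
      tendsto_const_nhds.add tendsto_one_div_add_atTop_nhds_zero_nat
    rw [add_zero] at h1
    refine tendsto_of_tendsto_of_tendsto_of_le_of_le tendsto_const_nhds h1 ?_ ?_
    · intro n; exact hc₀le (u n) (huN n)
    · intro n; exact huJ n
  · have h1 : Tendsto (fun n : ℕ => 3 * (1/((n:ℝ)+1)) / δ) atTop (𝓝 0) := by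
      have h2 : Tendsto (fun n : ℕ => (1/((n:ℝ)+1))) atTop (𝓝 0) :=
        tendsto_one_div_add_atTop_nhds_zero_nat
      have h3 := (h2.const_mul 3).div_const δ
      simpa using h3
    exact squeeze_zero (fun n => norm_nonneg _) huJ' h1
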